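/- Fix integers p ≥ 1 and r_1,…,r_p ≥ 1, facets F_1,…,F_m ⊆ {1,…,p}, a constant M > 1, probability weights f : 𝒳 → [0,1] with Σ_{x∈𝒳} f_x = 1, and a function ψ : 𝒳 → ℝ. For a family U = (u^(1),…,u^(m)), where u^(k) is a real-valued function on ∏_{i∈F_k}{1,…,r_i}, define S_U(x) = Σ_{k=1}^m u^(k)(x|_{F_k}) and R(U) = Σ_{x∈𝒳} f_x·(−ψ_x·S_U(x) + exp(S_U(x))). Let Φ' be a convex set of such families satisfying |S_U(x)| ≤ log M for all U ∈ Φ' and all x ∈ 𝒳, and let U* ∈ Φ' satisfy R(U*) ≤ R(U) for all U ∈ Φ'. Then for every U ∈ Φ': R(U) − R(U*) ≥ (1/(2M³))·Σ_{x∈𝒳} f_x·(exp(S_U(x)) − exp(S_{U*}(x)))². Equivalently, in the multiplicative parametrization θ^(k) = exp ∘ u^(k), the squared discrepancy Σ_x f_x·(∏_k θ^(k)(x|_{F_k}) − ∏_k θ*^(k)(x|_{F_k}))² is at most 2M³·(R(Θ) − R(Θ*)). -/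

import Mathlib

open Real Set

lemma convex_aux (M : ℝ) (hM : 1 < M) :
    ConvexOn ℝ (Set.Icc (-Real.log M) (Real.log M))
      (fun y => Real.exp y - y ^ 2 / (2 * M)) := by
  have hM0 : (0:ℝ) < M := by linarith
  have hd : ∀ y : ℝ, HasDerivAt (fun y => Real.exp y - y ^ 2 / (2 * M))
      (Real.exp y - y / M) y := by
    intro y
    have h1 := (Real.hasDerivAt_exp y).sub (((hasDerivAt_pow 2 y)).div_const (2 * M))
    refine h1.congr_deriv ?_
    field_simp
    ring
  have hderiv : deriv (fun y => Real.exp y - y ^ 2 / (2 * M)) = fun y => Real.exp y - y / M := by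
    funext y; exact (hd y).deriv
  have hd2 : ∀ y : ℝ, HasDerivAt (fun y => Real.exp y - y / M) (Real.exp y - 1 / M) y := by
    intro y
    have h1 := (Real.hasDerivAt_exp y).sub ((hasDerivAt_id y).div_const M)
    exact h1
  apply convexOn_of_deriv2_nonneg (convex_Icc _ _)
  · exact (Real.continuous_exp.sub (by continuity)).continuousOn
  · intro y _; exact (hd y).differentiableAt.differentiableWithinAt
  · intro y _; rw [hderiv]; exact (hd2 y).differentiableAt.differentiableWithinAt
  · intro y hy
    rw [interior_Icc] at hy
    have : deriv^[2] (fun y => Real.exp y - y ^ 2 / (2 * M)) y = Real.exp y - 1 / M := by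
      show deriv (deriv _) y = _
      rw [hderiv]; exact (hd2 y).deriv
    rw [this]
    have h1 : Real.exp (-Real.log M) ≤ Real.exp y := Real.exp_le_exp.2 hy.1.le
    rw [Real.exp_neg, Real.exp_log hM0] at h1
    have : 1 / M = M⁻¹ := one_div M
    linarith

lemma strong_exp (M : ℝ) (hM : 1 < M) {u v t : ℝ}
    (hu : |u| ≤ Real.log M) (hv : |v| ≤ Real.log M)
    (ht0 : 0 ≤ t) (ht1 : t ≤ 1) :
    Real.exp ((1 - t) * v + t * u) + 1 / (2 * M) * (t * (1 - t) * (u - v) ^ 2)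
      ≤ (1 - t) * Real.exp v + t * Real.exp u := by
  have hM0 : (0:ℝ) < M := by linarith
  obtain ⟨hu1, hu2⟩ := abs_le.1 hu
  obtain ⟨hv1, hv2⟩ := abs_le.1 hv
  have h := (convex_aux M hM).2 (mem_Icc.2 ⟨hv1, hv2⟩) (mem_Icc.2 ⟨hu1, hu2⟩)
    (by linarith : (0:ℝ) ≤ 1 - t) ht0 (by ring)
  simp only [smul_eq_mul] at h
  have h2M : (0:ℝ) < 2 * M := by positivity
  have h2 := mul_le_mul_of_nonneg_left h (le_of_lt h2M)
  have e1 : 2 * M * (Real.exp ((1 - t) * v + t * u) - ((1 - t) * v + t * u) ^ 2 / (2 * M))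
      = 2 * M * Real.exp ((1 - t) * v + t * u) - ((1 - t) * v + t * u) ^ 2 := by
    field_simp
  have e2 : 2 * M * ((1 - t) * (Real.exp v - v ^ 2 / (2 * M)) + t * (Real.exp u - u ^ 2 / (2 * M)))
      = 2 * M * ((1 - t) * Real.exp v + t * Real.exp u) - ((1 - t) * v ^ 2 + t * u ^ 2) := by
    field_simp
    ring
  rw [e1, e2] at h2
  have goal' : t * (1 - t) * (u - v) ^ 2
      ≤ ((1 - t) * Real.exp v + t * Real.exp u - Real.exp ((1 - t) * v + t * u)) * (2 * M) := by
    nlinarith [h2]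
  have hdiv := (div_le_iff₀ h2M).2 goal'
  have e3 : 1 / (2 * M) * (t * (1 - t) * (u - v) ^ 2) = (t * (1 - t) * (u - v) ^ 2) / (2 * M) := by
    ring
  linarith [e3, hdiv]

lemma exp_sq_lip (M : ℝ) (hM : 1 < M) {u v : ℝ} (hu : u ≤ Real.log M) (hv : v ≤ Real.log M) :
    (Real.exp u - Real.exp v) ^ 2 ≤ M ^ 2 * (u - v) ^ 2 := by
  have hM0 : (0:ℝ) < M := by linarith
  have hu' : Real.exp u ≤ M := by
    calc Real.exp u ≤ Real.exp (Real.log M) := Real.exp_le_exp.2 hu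
    _ = M := Real.exp_log hM0
  have hv' : Real.exp v ≤ M := by
    calc Real.exp v ≤ Real.exp (Real.log M) := Real.exp_le_exp.2 hv
    _ = M := Real.exp_log hM0
  rcases le_total u v with h | h
  · have h1 : Real.exp u ≤ Real.exp v := Real.exp_le_exp.2 h
    have h2 : Real.exp v - Real.exp u ≤ M * (v - u) := by
      have := Real.add_one_le_exp (u - v)
      have hev : Real.exp (u - v) * Real.exp v = Real.exp u := by
        rw [← Real.exp_add]; ring_nf
      nlinarith [Real.exp_pos v]
    nlinarith
  · have h1 : Real.exp v ≤ Real.exp u := Real.exp_le_exp.2 h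
    have h2 : Real.exp u - Real.exp v ≤ M * (u - v) := by
      have := Real.add_one_le_exp (v - u)
      have hev : Real.exp (v - u) * Real.exp u = Real.exp v := by
        rw [← Real.exp_add]; ring_nf
      nlinarith [Real.exp_pos u]
    nlinarith
open Real Set

section AuxMain

variable {E : Type*} [AddCommGroup E] [Module ℝ E] {X : Type*} [Fintype X]

lemma aux_main (S : E → X → ℝ)
    (hcomb : ∀ (s t : ℝ) (V W : E) (x : X), S (s • V + t • W) x = s * S V x + t * S W x)
    (f ψ : X → ℝ) (hf0 : ∀ x, 0 ≤ f x) (M : ℝ) (hM : 1 < M)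
    (Φ : Set E) (hconv : Convex ℝ Φ)
    (hbound : ∀ U ∈ Φ, ∀ x, |S U x| ≤ Real.log M)
    (Ustar : E) (hUstar : Ustar ∈ Φ)
    (hmin : ∀ U ∈ Φ,
      ∑ x, f x * (-ψ x * S Ustar x + Real.exp (S Ustar x)) ≤
        ∑ x, f x * (-ψ x * S U x + Real.exp (S U x)))
    (U : E) (hU : U ∈ Φ) :
    (∑ x, f x * (-ψ x * S U x + Real.exp (S U x))) -
      (∑ x, f x * (-ψ x * S Ustar x + Real.exp (S Ustar x))) ≥
      (1 / (2 * M ^ 3)) * ∑ x, f x * (Real.exp (S U x) - Real.exp (S Ustar x)) ^ 2 := by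
  have hM0 : (0 : ℝ) < M := by linarith
  set RU := ∑ x, f x * (-ψ x * S U x + Real.exp (S U x)) with hRU
  set RS := ∑ x, f x * (-ψ x * S Ustar x + Real.exp (S Ustar x)) with hRS
  set D := ∑ x, f x * (S U x - S Ustar x) ^ 2 with hD
  set Esq := ∑ x, f x * (Real.exp (S U x) - Real.exp (S Ustar x)) ^ 2 with hE
  have hD0 : 0 ≤ D := Finset.sum_nonneg fun x _ => mul_nonneg (hf0 x) (sq_nonneg _)
  -- Step 1: for all t ∈ (0,1], (1/(2M)) (1-t) D ≤ RU - RS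
  have step : ∀ t ∈ Set.Ioc (0:ℝ) 1, 1 / (2 * M) * ((1 - t) * D) ≤ RU - RS := by
    rintro t ⟨ht0, ht1⟩
    set Ut := (1 - t) • Ustar + t • U with hUt
    have hUtΦ : Ut ∈ Φ := hconv hUstar hU (by linarith) ht0.le (by ring)
    have h1 := hmin Ut hUtΦ
    have h2 : ∑ x, f x * (-ψ x * S Ut x + Real.exp (S Ut x)) ≤
        ∑ x, ((1 - t) * (f x * (-ψ x * S Ustar x + Real.exp (S Ustar x))) +
          t * (f x * (-ψ x * S U x + Real.exp (S U x))) -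
          (1 / (2 * M) * (t * (1 - t))) * (f x * (S U x - S Ustar x) ^ 2)) := by
      apply Finset.sum_le_sum
      intro x _
      rw [hUt, hcomb]
      have hse := strong_exp M hM (hbound U hU x) (hbound Ustar hUstar x) ht0.le ht1
      nlinarith [hf0 x, hse]
    rw [Finset.sum_sub_distrib, Finset.sum_add_distrib, ← Finset.mul_sum, ← Finset.mul_sum,
      ← Finset.mul_sum] at h2
    have h3 : t * (1 / (2 * M) * ((1 - t) * D)) ≤ t * (RU - RS) := by
      nlinarith [le_trans h1 h2]
    exact le_of_mul_le_mul_left h3 ht0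
  -- Step 2: limit as t → 0⁺
  have hlim : 1 / (2 * M) * D ≤ RU - RS := by
    have hc : Continuous fun t : ℝ => 1 / (2 * M) * ((1 - t) * D) := by continuity
    have htend : Filter.Tendsto (fun t : ℝ => 1 / (2 * M) * ((1 - t) * D))
        (nhdsWithin 0 (Set.Ioi 0)) (nhds (1 / (2 * M) * D)) := by
      have h0 : Filter.Tendsto (fun t : ℝ => 1 / (2 * M) * ((1 - t) * D))
          (nhdsWithin 0 (Set.Ioi 0)) (nhds (1 / (2 * M) * ((1 - (0:ℝ)) * D))) :=
        (hc.tendsto 0).mono_left nhdsWithin_le_nhds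
      convert h0 using 2
      norm_num
    refine le_of_tendsto htend ?_
    filter_upwards [Ioc_mem_nhdsGT_of_mem (by norm_num : (0:ℝ) ∈ Set.Ico (0:ℝ) 1)] with t ht
    exact step t ht
  -- Step 3: Lipschitz comparison
  have hEsq : Esq ≤ M ^ 2 * D := by
    rw [hE, hD, Finset.mul_sum]
    apply Finset.sum_le_sum
    intro x _
    have hb1 := (abs_le.1 (hbound U hU x)).2
    have hb2 := (abs_le.1 (hbound Ustar hUstar x)).2
    have hlip := exp_sq_lip M hM hb1 hb2
    nlinarith [hf0 x, hlip]
  have heq : (1 : ℝ) / (2 * M ^ 3) * (M ^ 2 * D) = 1 / (2 * M) * D := by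
    field_simp
  have : (1 : ℝ) / (2 * M ^ 3) * Esq ≤ 1 / (2 * M ^ 3) * (M ^ 2 * D) :=
    mul_le_mul_of_nonneg_left hEsq (by positivity)
  linarith [heq, hlim]

end AuxMain
set_option maxHeartbeats 1000000

/-- Paper's Proposition 3.6: the weighted squared discrepancy of the tensor values is
controlled by `2M³` times the excess risk, for any minimizer `U*` of the reparametrized
risk over a convex constraint set `Φ'` with `|S_U| ≤ log M`.  The second conclusion is the
equivalent multiplicative formulation in the parameters `θ⁽ᵏ⁾ = exp ∘ u⁽ᵏ⁾`. -/
theorem excess_risk_lower_bound_values {p m : ℕ} (hp : 1 ≤ p)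
    (r : Fin p → ℕ) (hr : ∀ i, 1 ≤ r i)
    (F : Fin m → Finset (Fin p)) (M : ℝ) (hM : 1 < M)
    (f : (∀ i, Fin (r i)) → ℝ) (hf : ∀ x, f x ∈ Set.Icc (0 : ℝ) 1)
    (hsum : ∑ x, f x = 1)
    (ψ : (∀ i, Fin (r i)) → ℝ)
    (Φ' : Set (∀ k : Fin m, ((i : {i : Fin p // i ∈ F k}) → Fin (r i.1)) → ℝ))
    (hconv : Convex ℝ Φ')
    (hbound : ∀ U ∈ Φ', ∀ x : ∀ i, Fin (r i),
      |∑ k, U k (fun i => x i.1)| ≤ Real.log M)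
    (Ustar : ∀ k : Fin m, ((i : {i : Fin p // i ∈ F k}) → Fin (r i.1)) → ℝ)
    (hUstar : Ustar ∈ Φ')
    (hmin : ∀ U ∈ Φ',
      ∑ x, f x * (-ψ x * (∑ k, Ustar k (fun i => x i.1)) +
          Real.exp (∑ k, Ustar k (fun i => x i.1))) ≤
        ∑ x, f x * (-ψ x * (∑ k, U k (fun i => x i.1)) +
          Real.exp (∑ k, U k (fun i => x i.1)))) :
    ∀ U ∈ Φ',
      ((∑ x, f x * (-ψ x * (∑ k, U k (fun i => x i.1)) +
            Real.exp (∑ k, U k (fun i => x i.1)))) -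
          (∑ x, f x * (-ψ x * (∑ k, Ustar k (fun i => x i.1)) +
            Real.exp (∑ k, Ustar k (fun i => x i.1)))) ≥
        (1 / (2 * M ^ 3)) *
          ∑ x, f x * (Real.exp (∑ k, U k (fun i => x i.1)) -
            Real.exp (∑ k, Ustar k (fun i => x i.1))) ^ 2) ∧
      (∑ x, f x * ((∏ k, Real.exp (U k (fun i => x i.1))) -
            ∏ k, Real.exp (Ustar k (fun i => x i.1))) ^ 2 ≤
        2 * M ^ 3 *
          ((∑ x, f x * (-ψ x * (∑ k, U k (fun i => x i.1)) +
              Real.exp (∑ k, U k (fun i => x i.1)))) -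
            (∑ x, f x * (-ψ x * (∑ k, Ustar k (fun i => x i.1)) +
              Real.exp (∑ k, Ustar k (fun i => x i.1)))))) := by
  intro U hU
  have hcomb : ∀ (s t : ℝ)
      (V W : ∀ k : Fin m, ((i : {i : Fin p // i ∈ F k}) → Fin (r i.1)) → ℝ)
      (x : ∀ i, Fin (r i)),
      (∑ k, (s • V + t • W) k (fun i => x i.1)) =
        s * (∑ k, V k (fun i => x i.1)) + t * (∑ k, W k (fun i => x i.1)) := by
    intro s t V W x
    simp only [Pi.add_apply, Pi.smul_apply, smul_eq_mul]
    rw [Finset.sum_add_distrib, Finset.mul_sum, Finset.mul_sum]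
  have h1 := aux_main (X := ∀ i, Fin (r i))
      (fun V x => ∑ k, V k (fun i => x i.1)) hcomb f ψ (fun x => (hf x).1) M hM
      Φ' hconv hbound Ustar hUstar hmin U hU
  refine ⟨h1, ?_⟩
  have hrw : ∀ (V : ∀ k : Fin m, ((i : {i : Fin p // i ∈ F k}) → Fin (r i.1)) → ℝ)
      (x : ∀ i, Fin (r i)),
      (∏ k, Real.exp (V k (fun i => x i.1))) = Real.exp (∑ k, V k (fun i => x i.1)) :=
    fun V x => (Real.exp_sum _ _).symm
  simp only [hrw]
  have h2M3 : (0:ℝ) < 2 * M ^ 3 := by positivity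
  calc ∑ x, f x * (Real.exp (∑ k, U k (fun i => x i.1)) -
        Real.exp (∑ k, Ustar k (fun i => x i.1))) ^ 2
      = 2 * M ^ 3 * ((1 / (2 * M ^ 3)) *
        ∑ x, f x * (Real.exp (∑ k, U k (fun i => x i.1)) -
          Real.exp (∑ k, Ustar k (fun i => x i.1))) ^ 2) := by
        field_simp
    _ ≤ 2 * M ^ 3 * _ := mul_le_mul_of_nonneg_left h1 h2M3.le
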